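/- If u, v, w are words over an alphabet A with |u| ≥ |w|, then in the queue monoid, u v w̄ ≡ u w̄ v, where w̄ denotes the sequence of read actions corresponding to w. -/

import Mathlib

/-- One-step action of a queue symbol (`Sum.inl a` = write `a`, `Sum.inr a` = read `a`)
on a queue state (`none` = error state ⊥). -/
def qstep (A : Type) [DecidableEq A] : Option (List A) → A ⊕ A → Option (List A)
  | none, _ => none
  | some q, Sum.inl a => some (q ++ [a])
  | some q, Sum.inr a =>
      match q with
      | [] => none
      | b :: q' => if b = a then some q' else none

/-- Action of a word of queue operations on a queue state. -/
def qact (A : Type) [DecidableEq A] (q : Option (List A)) (u : List (A ⊕ A)) :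
    Option (List A) :=
  u.foldl (qstep A) q

/-- Equivalence of action sequences: same effect on every queue state. -/
def QEquiv (A : Type) [DecidableEq A] (u v : List (A ⊕ A)) : Prop :=
  ∀ q : Option (List A), qact A q u = qact A q v

/-- The sequence of write actions of a word. -/
def wr {A : Type} (u : List A) : List (A ⊕ A) := u.map Sum.inl

/-- The sequence of read actions of a word. -/
def rd {A : Type} (u : List A) : List (A ⊕ A) := u.map Sum.inr

theorem qact_append (A : Type) [DecidableEq A] (q : Option (List A))
    (x y : List (A ⊕ A)) : qact A q (x ++ y) = qact A (qact A q x) y :=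
  List.foldl_append

theorem qact_none (A : Type) [DecidableEq A] (u : List (A ⊕ A)) :
    qact A none u = none := by
  induction u with
  | nil => rfl
  | cons a t ih => simpa [qact, qstep] using ih

theorem qact_wr (A : Type) [DecidableEq A] (q v : List A) :
    qact A (some q) (wr v) = some (q ++ v) := by
  induction v generalizing q with
  | nil => simp [qact, wr]
  | cons a t ih => simpa [qact, wr, qstep] using ih (q ++ [a])

theorem key (A : Type) [DecidableEq A] (w : List A) :
    ∀ q v : List A, w.length ≤ q.length →
    qact A (some q) (rd w ++ wr v) = qact A (some q) (wr v ++ rd w) := by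
  induction w with
  | nil => intro q v _; simp [rd]
  | cons a t ih =>
    intro q v hle
    cases q with
    | nil => simp at hle
    | cons b q' =>
      have hcons : rd (a :: t) = Sum.inr a :: rd t := rfl
      rw [hcons, List.cons_append]
      show qact A (qstep A (some (b :: q')) (Sum.inr a)) (rd t ++ wr v)
        = qact A (some (b :: q')) (wr v ++ Sum.inr a :: rd t)
      conv_rhs => rw [qact_append, qact_wr]
      show _ = qact A (qstep A (some ((b :: q') ++ v)) (Sum.inr a)) (rd t)
      simp only [List.cons_append, qstep]
      by_cases hb : b = a
      · rw [if_pos hb, if_pos hb, ih q' v (Nat.le_of_succ_le_succ hle),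
          qact_append, qact_wr]
      · rw [if_neg hb, if_neg hb, qact_none, qact_none]

/-- If `|u| ≥ |w|` then `u v w̄ ≡ u w̄ v` in the queue monoid. -/
theorem stmt1 (A : Type) [DecidableEq A] (u v w : List A)
    (h : w.length ≤ u.length) :
    QEquiv A (wr u ++ wr v ++ rd w) (wr u ++ rd w ++ wr v) := by
  intro q
  cases q with
  | none => simp [qact_append, qact_none]
  | some q0 =>
    rw [qact_append, qact_append, qact_append, qact_append, qact_wr]
    rw [← qact_append, ← qact_append]
    exact (key A w (q0 ++ u) v (by simpa using le_add_of_le_right (by simpa using h))).symm
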